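/- The estimator I_i^n = (1/n) ∑_{j=1}^n D_KL( p(y | x_s, x_i^j) ‖ (1/n) ∑_{l=1}^n p(y | x_s, x_i^l) ), where x_i^1, ..., x_i^n are i.i.d. samples from p(x_i | x_s), converges almost surely to the conditional mutual information I(y; x_i | x_s) as n → ∞. -/

import Mathlib

open MeasureTheory ProbabilityTheory Filter Topology

/-- The CMI estimator `I_i^n = (1/n) ∑ⱼ D_KL(p(y|x_s,x_i^j) ‖ (1/n) ∑ₗ p(y|x_s,x_i^l))`,
with `x_i^1, x_i^2, ...` i.i.d. samples from `p(x_i | x_s)` (pmf `w` on a finite set `V`),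
converges almost surely to `I(y; x_i | x_s) = ∑ᵥ w v * D_KL(P v ‖ ∑ᵥ' w v' * P v')`,
where `P v = p(y | x_s, x_i = v)`. -/
theorem cmi_estimator_tendsto_cmi
    {V Y : Type*} [Fintype V] [Fintype Y] [MeasurableSpace V] [MeasurableSingletonClass V]
    {Ω : Type*} [MeasurableSpace Ω] (μ : Measure Ω) [IsProbabilityMeasure μ]
    (w : V → ℝ) (hw_pos : ∀ v, 0 < w v) (hw_sum : ∑ v, w v = 1)
    (P : V → Y → ℝ) (hP_pos : ∀ v y, 0 < P v y) (hP_sum : ∀ v, ∑ y, P v y = 1)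
    (X : ℕ → Ω → V) (hX_meas : ∀ n, Measurable (X n))
    (hX_indep : iIndepFun X μ)
    (hX_dist : ∀ n v, μ (X n ⁻¹' {v}) = ENNReal.ofReal (w v)) :
    ∀ᵐ ω ∂μ, Tendsto
      (fun n : ℕ => (1 / (n : ℝ)) * ∑ j ∈ Finset.range n, ∑ y,
        P (X j ω) y * Real.log (P (X j ω) y /
          ((1 / (n : ℝ)) * ∑ l ∈ Finset.range n, P (X l ω) y)))
      atTop
      (nhds (∑ v, w v * ∑ y, P v y * Real.log (P v y / (∑ v', w v' * P v' y)))) := by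
  classical
  -- indicator random variables
  set Z : V → ℕ → Ω → ℝ := fun v j ω => if X j ω = v then (1 : ℝ) else 0 with hZ
  -- SLLN for each v
  have hSLLN : ∀ v : V, ∀ᵐ ω ∂μ,
      Tendsto (fun n : ℕ => (∑ j ∈ Finset.range n, Z v j ω) / n) atTop (𝓝 (w v)) := by
    intro v
    have hmeas : ∀ j, Measurable (Z v j) := by
      intro j
      exact (measurable_const.ite (hX_meas j (measurableSet_singleton v)) measurable_const)
    have hident : ∀ i, IdentDistrib (Z v i) (Z v 0) μ μ := by
      intro i
      have hXid : IdentDistrib (X i) (X 0) μ μ := by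
        refine ⟨(hX_meas i).aemeasurable, (hX_meas 0).aemeasurable, ?_⟩
        ext s hs
        rw [Measure.map_apply (hX_meas i) hs, Measure.map_apply (hX_meas 0) hs]
        have : ∀ (n : ℕ), μ (X n ⁻¹' s) = ∑ v ∈ s.toFinite.toFinset, ENNReal.ofReal (w v) := by
          intro n
          have hs' : X n ⁻¹' s = ⋃ v ∈ s.toFinite.toFinset, X n ⁻¹' {v} := by
            ext ω'
            simp only [Set.mem_preimage, Set.mem_iUnion, Set.Finite.mem_toFinset,
              Set.mem_singleton_iff]
            exact ⟨fun h => ⟨_, h, rfl⟩, fun ⟨u, hu, he⟩ => he ▸ hu⟩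
          rw [hs', measure_biUnion_finset]
          · exact Finset.sum_congr rfl fun v _ => hX_dist n v
          · intro a _ b _ hab
            simp only [Function.onFun]
            apply Disjoint.preimage
            simp [hab]
          · intro v _
            exact hX_meas n (measurableSet_singleton v)
        rw [this i, this 0]
      exact hXid.comp (measurable_const.ite (measurableSet_singleton v) measurable_const :
        Measurable (fun x : V => if x = v then (1 : ℝ) else 0))
    have hint : Integrable (Z v 0) μ := by
      have : Z v 0 = (X 0 ⁻¹' {v}).indicator (fun _ => (1 : ℝ)) := by
        ext ω; simp [Z, Set.indicator_apply]
      rw [this]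
      exact (integrable_const (1 : ℝ)).indicator (hX_meas 0 (measurableSet_singleton v))
    have hindep : Pairwise (Function.onFun (IndepFun · · μ) (Z v)) := by
      intro i j hij
      exact (hX_indep.indepFun hij).comp
        (measurable_const.ite (measurableSet_singleton v) measurable_const :
          Measurable (fun x : V => if x = v then (1 : ℝ) else 0))
        (measurable_const.ite (measurableSet_singleton v) measurable_const :
          Measurable (fun x : V => if x = v then (1 : ℝ) else 0))
    have hmean : μ[Z v 0] = w v := by
      have : Z v 0 = (X 0 ⁻¹' {v}).indicator (fun _ => (1 : ℝ)) := by
        ext ω; simp [Z, Set.indicator_apply]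
      rw [this, integral_indicator_const _ (hX_meas 0 (measurableSet_singleton v))]
      simp [measureReal_def, hX_dist 0 v, ENNReal.toReal_ofReal (hw_pos v).le]
    have := strong_law_ae_real (Z v) hint hindep hident
    rwa [hmean] at this
  rw [← ae_all_iff] at hSLLN
  filter_upwards [hSLLN] with ω hω
  -- empirical frequencies
  set c : ℕ → V → ℝ := fun n v => (1 / (n : ℝ)) * ∑ j ∈ Finset.range n, Z v j ω with hc
  have hc_tendsto : Tendsto (fun n => c n) atTop (𝓝 w) := by
    rw [tendsto_pi_nhds]
    intro v
    have := hω v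
    simpa [c, div_eq_inv_mul, one_div] using this
  -- algebraic identity: averages of g ∘ X equal weighted sums by empirical frequencies
  have key : ∀ (n : ℕ) (g : V → ℝ),
      (1 / (n : ℝ)) * ∑ j ∈ Finset.range n, g (X j ω) = ∑ v, c n v * g v := by
    intro n g
    have h1 : ∀ j, g (X j ω) = ∑ v, Z v j ω * g v := by
      intro j
      simp [Z, ite_mul, Finset.sum_ite_eq' Finset.univ (X j ω) g]
    calc (1 / (n : ℝ)) * ∑ j ∈ Finset.range n, g (X j ω)
        = (1 / (n : ℝ)) * ∑ j ∈ Finset.range n, ∑ v, Z v j ω * g v := by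
          simp_rw [h1]
      _ = ∑ v, (1 / (n : ℝ)) * (∑ j ∈ Finset.range n, Z v j ω) * g v := by
          rw [Finset.sum_comm, Finset.mul_sum]
          congr 1; ext v
          rw [← Finset.sum_mul, mul_assoc]
      _ = ∑ v, c n v * g v := rfl
  -- rewrite the estimator as a function of empirical frequencies
  have hrw : ∀ n : ℕ,
      (1 / (n : ℝ)) * ∑ j ∈ Finset.range n, ∑ y,
        P (X j ω) y * Real.log (P (X j ω) y /
          ((1 / (n : ℝ)) * ∑ l ∈ Finset.range n, P (X l ω) y)) =
      ∑ v, c n v * ∑ y, P v y * Real.log (P v y / ∑ v', c n v' * P v' y) := by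
    intro n
    have hden : ∀ y, (1 / (n : ℝ)) * ∑ l ∈ Finset.range n, P (X l ω) y
        = ∑ v', c n v' * P v' y := fun y => key n (fun v => P v y)
    simp_rw [hden]
    exact key n (fun v => ∑ y, P v y * Real.log (P v y / ∑ v', c n v' * P v' y))
  simp_rw [hrw]
  -- continuity of the CMI functional at w
  have hSpos : ∀ y, (0 : ℝ) < ∑ v', w v' * P v' y := by
    intro y
    have : ∀ v' ∈ Finset.univ, (0 : ℝ) < w v' * P v' y :=
      fun v' _ => mul_pos (hw_pos v') (hP_pos v' y)
    have hVne : Nonempty V := by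
      rcases isEmpty_or_nonempty V with h | h
      · exfalso; rw [Finset.univ_eq_empty, Finset.sum_empty] at hw_sum; norm_num at hw_sum
      · exact h
    exact Finset.sum_pos this ⟨Classical.arbitrary V, Finset.mem_univ _⟩
  have hcont : ContinuousAt
      (fun d : V → ℝ => ∑ v, d v * ∑ y, P v y * Real.log (P v y / ∑ v', d v' * P v' y)) w := by
    apply tendsto_finset_sum
    intro v _
    apply ContinuousAt.mul (continuous_apply v).continuousAt
    apply tendsto_finset_sum
    intro y _
    apply ContinuousAt.mul continuousAt_const
    have hden : ContinuousAt (fun d : V → ℝ => ∑ v', d v' * P v' y) w := by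
      apply tendsto_finset_sum
      intro v' _
      exact ContinuousAt.mul (continuous_apply v').continuousAt continuousAt_const
    have harg : ContinuousAt (fun d : V → ℝ => P v y / ∑ v', d v' * P v' y) w :=
      ContinuousAt.div continuousAt_const hden (hSpos y).ne'
    exact harg.log (div_pos (hP_pos v y) (hSpos y)).ne'
  exact hcont.tendsto.comp hc_tendsto
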